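/- arXiv:2311.13291 — 2 statements merged into one kernel-verified Lean document; each statement's English description precedes it below -/
import Mathlib

section
/- Let ρ(x) = |x| and let ε be a real-valued random variable with cumulative distribution function F. Then for every t ∈ ℝ, E[|ε + t| − |ε|] = 2∫_0^{−t} F(x) dx + t (where the integral is interpreted with sign, i.e. ∫_0^{−t} = −∫_{−t}^0 when t > 0). -/
open MeasureTheory

lemma L1 (a c d : ℝ) (h : c ≤ d) :
    ∫ x in Set.Ioc c d, (Set.Ici a).indicator (fun _ => (1:ℝ)) x = d - min d (max c a) := by
  rw [MeasureTheory.setIntegral_indicator measurableSet_Ici, MeasureTheory.setIntegral_const,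
    smul_eq_mul, mul_one]
  rcases le_or_gt a c with hac | hac
  · have hsub : Set.Ioc c d ⊆ Set.Ici a := fun x hx => le_trans hac hx.1.le
    rw [Set.inter_eq_left.mpr hsub, measureReal_def, Real.volume_Ioc,
      ENNReal.toReal_ofReal (by linarith), max_eq_left hac, min_eq_right h]
  · have hset : Set.Ioc c d ∩ Set.Ici a = Set.Icc a d := by
      ext x
      simp only [Set.mem_inter_iff, Set.mem_Ioc, Set.mem_Icc, Set.mem_Ici]
      constructor
      · rintro ⟨⟨_, h2⟩, h3⟩; exact ⟨h3, h2⟩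
      · rintro ⟨h1, h2⟩; exact ⟨⟨lt_of_lt_of_le hac h1, h2⟩, h1⟩
    rw [hset, measureReal_def, Real.volume_Icc, max_eq_right hac.le]
    rcases le_or_gt a d with had | had
    · rw [ENNReal.toReal_ofReal (by linarith), min_eq_right had]
    · rw [ENNReal.ofReal_of_nonpos (by linarith), min_eq_left had.le]; simp

lemma L2 {Ω : Type*} [MeasurableSpace Ω] (ℙ : Measure Ω) [IsProbabilityMeasure ℙ]
    (ε : Ω → ℝ) (hmeas : Measurable ε) (c d : ℝ) (h : c ≤ d) :
    ∫ ω, (d - min d (max c (ε ω))) ∂ℙ = ∫ x in Set.Ioc c d, (ℙ {ω | ε ω ≤ x}).toReal := by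
  have hrw : (fun ω => d - min d (max c (ε ω)))
      = fun ω => ∫ x in Set.Ioc c d, (Set.Ici (ε ω)).indicator (fun _ => (1:ℝ)) x :=
    funext fun ω => (L1 (ε ω) c d h).symm
  rw [hrw]
  have hfin : IsFiniteMeasure (volume.restrict (Set.Ioc c d)) :=
    ⟨by rw [Measure.restrict_apply_univ]; exact measure_Ioc_lt_top⟩
  have hSmeas : MeasurableSet {p : Ω × ℝ | ε p.1 ≤ p.2} :=
    measurableSet_le (hmeas.comp measurable_fst) measurable_snd
  have hint : Integrable (Function.uncurry fun (ω : Ω) (x : ℝ) =>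
      ({p : Ω × ℝ | ε p.1 ≤ p.2}).indicator (fun _ => (1:ℝ)) (ω, x))
      (ℙ.prod (volume.restrict (Set.Ioc c d))) := by
    have : Function.uncurry (fun (ω : Ω) (x : ℝ) =>
        ({p : Ω × ℝ | ε p.1 ≤ p.2}).indicator (fun _ => (1:ℝ)) (ω, x))
        = ({p : Ω × ℝ | ε p.1 ≤ p.2}).indicator (fun _ => (1:ℝ)) := by
      ext p; cases p; rfl
    rw [this]
    refine Integrable.mono' (integrable_const 1)
      ((measurable_const.indicator hSmeas).aestronglyMeasurable) ?_
    filter_upwards with p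
    by_cases hp : p ∈ {p : Ω × ℝ | ε p.1 ≤ p.2} <;>
      simp [Set.indicator_apply, hp]
  have heq : ∀ ω, (∫ x in Set.Ioc c d, (Set.Ici (ε ω)).indicator (fun _ => (1:ℝ)) x)
      = ∫ x in Set.Ioc c d, ({p : Ω × ℝ | ε p.1 ≤ p.2}).indicator (fun _ => (1:ℝ)) (ω, x) := by
    intro ω; rfl
  simp_rw [heq]
  rw [MeasureTheory.integral_integral_swap hint]
  refine setIntegral_congr_fun measurableSet_Ioc (fun x _ => ?_)
  have hpt : ∀ ω, ({p : Ω × ℝ | ε p.1 ≤ p.2}).indicator (fun _ => (1:ℝ)) (ω, x)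
      = ({ω | ε ω ≤ x}).indicator (fun _ => (1:ℝ)) ω := by
    intro ω; simp [Set.indicator_apply]
  simp_rw [hpt]
  have hms : MeasurableSet {ω | ε ω ≤ x} := hmeas measurableSet_Iic
  rw [integral_indicator_const (1:ℝ) hms]
  simp
  rfl

lemma P1 (a t : ℝ) (ht : t ≤ 0) :
    |a + t| - |a| = t + 2 * (-t - min (-t) (max 0 a)) := by
  rcases abs_cases (a + t) with ⟨h1, h2⟩ | ⟨h1, h2⟩ <;>
    rcases abs_cases a with ⟨h3, h4⟩ | ⟨h3, h4⟩ <;>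
    simp only [min_def, max_def] <;> split_ifs <;> linarith

lemma P2 (a t : ℝ) (ht : 0 ≤ t) :
    |a + t| - |a| = t - 2 * (0 - min 0 (max (-t) a)) := by
  rcases abs_cases (a + t) with ⟨h1, h2⟩ | ⟨h1, h2⟩ <;>
    rcases abs_cases a with ⟨h3, h4⟩ | ⟨h3, h4⟩ <;>
    simp only [min_def, max_def] <;> split_ifs <;> linarith

/-- For the absolute-value loss, the expected increment `E[|ε + t| − |ε|]` equals
`2∫_0^{−t} F(x) dx + t`, where `F` is the CDF of `ε` and the integral is a signed integral. -/
theorem stmt3 {Ω : Type*} [MeasurableSpace Ω] (ℙ : Measure Ω) [IsProbabilityMeasure ℙ]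
    (ε : Ω → ℝ) (hmeas : Measurable ε) (hint : Integrable ε ℙ)
    (F : ℝ → ℝ) (hF : ∀ x, F x = (ℙ {ω | ε ω ≤ x}).toReal) (t : ℝ) :
    ∫ ω, (|ε ω + t| - |ε ω|) ∂ℙ = 2 * (∫ x in (0 : ℝ)..(-t), F x) + t := by
  simp only [hF]
  rcases le_total t 0 with ht | ht
  · have hb : (0:ℝ) ≤ -t := by linarith
    rw [intervalIntegral.integral_of_le hb]
    have hg : Measurable fun ω => -t - min (-t) (max 0 (ε ω)) :=
      measurable_const.sub (measurable_const.min (measurable_const.max hmeas))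
    have hgint : Integrable (fun ω => -t - min (-t) (max 0 (ε ω))) ℙ := by
      refine Integrable.mono' (integrable_const (-t)) hg.aestronglyMeasurable ?_
      filter_upwards with ω
      rw [Real.norm_eq_abs, abs_le]
      constructor
      · have h1 : min (-t) (max 0 (ε ω)) ≤ -t := min_le_left _ _
        linarith
      · have h1 : (0:ℝ) ≤ min (-t) (max 0 (ε ω)) := le_min hb (le_max_left _ _)
        linarith
    have hcongr : (fun ω => |ε ω + t| - |ε ω|)
        = fun ω => t + 2 * (-t - min (-t) (max 0 (ε ω))) :=
      funext fun ω => P1 (ε ω) t ht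
    rw [hcongr, integral_add (integrable_const t) (hgint.const_mul 2),
      integral_const, integral_const_mul, L2 ℙ ε hmeas 0 (-t) hb]
    simp only [probReal_univ, measure_univ, ENNReal.toReal_one, smul_eq_mul, one_mul]
    ring
  · have hb : -t ≤ (0:ℝ) := by linarith
    rw [intervalIntegral.integral_symm, intervalIntegral.integral_of_le hb]
    have hg : Measurable fun ω => (0:ℝ) - min 0 (max (-t) (ε ω)) :=
      measurable_const.sub (measurable_const.min (measurable_const.max hmeas))
    have hgint : Integrable (fun ω => (0:ℝ) - min 0 (max (-t) (ε ω))) ℙ := by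
      refine Integrable.mono' (integrable_const t) hg.aestronglyMeasurable ?_
      filter_upwards with ω
      rw [Real.norm_eq_abs, abs_le]
      constructor
      · have h1 : min 0 (max (-t) (ε ω)) ≤ 0 := min_le_left _ _
        linarith
      · have h1 : -t ≤ min 0 (max (-t) (ε ω)) := le_min hb (le_max_left _ _)
        linarith
    have hcongr : (fun ω => |ε ω + t| - |ε ω|)
        = fun ω => t - 2 * ((0:ℝ) - min 0 (max (-t) (ε ω))) :=
      funext fun ω => P2 (ε ω) t ht
    rw [hcongr, integral_sub (integrable_const t) (hgint.const_mul 2),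
      integral_const, integral_const_mul, L2 ℙ ε hmeas (-t) 0 hb]
    simp only [probReal_univ, measure_univ, ENNReal.toReal_one, smul_eq_mul, one_mul]
    ring
end

section
/- Suppose β₀ ∈ H^m((0,1)) with m ≥ 1 and the discrete semi-norms ‖β‖_p² = (1/p)Σ_{j=1}^p |β(t_j)|², J²(β) = ‖β‖_p² + ∫_0^1 |β^{(m)}|², and J̃²(β) = ‖Pβ‖_p² + ∫_0^1 |β^{(m)}|², where P is the orthogonal projection (with respect to the discrete inner product (1/p)Σ_j f(t_j)g(t_j)) onto polynomials of degree < m evaluated at {t_j}. Then there exist constants 0 < c₁ ≤ c₂ < ∞, independent of β, such that c₁ J̃(β) ≤ J(β) ≤ c₂ J̃(β) for all β ∈ H^m. -/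
open intervalIntegral
open scoped Nat

/-- Discrete squared semi-norm `(1/p) Σ_j f(t_j)²` at the discretization points. -/
noncomputable def discSq (p : ℕ) (t : Fin p → ℝ) (f : ℝ → ℝ) : ℝ :=
  (1 / (p : ℝ)) * ∑ j, f (t j) ^ 2

/-- Sobolev-type penalty `∫_0^1 |f^{(m)}|²`. -/
noncomputable def penInt (m : ℕ) (f : ℝ → ℝ) : ℝ :=
  ∫ u in (0 : ℝ)..1, (iteratedDeriv m f u) ^ 2

/-- Cauchy–Schwarz on `[0,1]`: `(∫ |g|)² ≤ ∫ g²`. -/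
lemma sq_integral_abs_le (g : ℝ → ℝ) (hg : Continuous g) :
    (∫ u in (0:ℝ)..1, |g u|) ^ 2 ≤ ∫ u in (0:ℝ)..1, g u ^ 2 := by
  set I := ∫ u in (0:ℝ)..1, |g u| with hI
  have h1 : (0:ℝ) ≤ ∫ u in (0:ℝ)..1, (|g u| - I) ^ 2 :=
    intervalIntegral.integral_nonneg (by norm_num) fun u _ => sq_nonneg _
  have h2 : ∫ u in (0:ℝ)..1, (|g u| - I) ^ 2
      = (∫ u in (0:ℝ)..1, g u ^ 2) - I ^ 2 := by
    have heq : ∀ u, (|g u| - I) ^ 2 = g u ^ 2 - (2 * I) * |g u| + I ^ 2 := by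
      intro u; rw [sub_sq, sq_abs]; ring
    simp_rw [heq]
    rw [intervalIntegral.integral_add (f := fun u => g u ^ 2 - 2 * I * |g u|)
        (g := fun _ => I ^ 2)
        (((hg.pow 2).sub (continuous_const.mul hg.abs)).intervalIntegrable _ _)
        (intervalIntegrable_const),
      intervalIntegral.integral_sub (f := fun u => g u ^ 2) (g := fun u => 2 * I * |g u|)
        ((hg.pow 2).intervalIntegrable _ _)
        ((continuous_const.mul hg.abs).intervalIntegrable _ _),
      intervalIntegral.integral_const_mul, intervalIntegral.integral_const]
    simp only [smul_eq_mul]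
    ring
  nlinarith [h1, h2]

/-- Taylor with integral remainder, bounded: there is a polynomial of degree `< m`
approximating `β` on `[0,1]` with squared error at most `∫₀¹ |β⁽ᵐ⁾|²`. -/
lemma taylor_poly_approx (m : ℕ) (hm : 1 ≤ m) (β : ℝ → ℝ) (hβ : ContDiff ℝ m β) :
    ∃ q : Polynomial ℝ, q.degree < (m : ℕ) ∧
      ∀ x ∈ Set.Icc (0:ℝ) 1, (β x - q.eval x) ^ 2 ≤ penInt m β := by
  classical
  set g := iteratedDeriv m β with hgdef
  have hg : Continuous g := hβ.continuous_iteratedDeriv m le_rfl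
  set q : Polynomial ℝ :=
    ∑ i ∈ Finset.range m, Polynomial.C (iteratedDeriv i β 0 / i !) * Polynomial.X ^ i with hq
  have hqdeg : q.degree < (m : ℕ) := by
    refine lt_of_le_of_lt (Polynomial.degree_sum_le _ _) ?_
    rw [Finset.sup_lt_iff (by exact_mod_cast WithBot.bot_lt_coe m)]
    intro i hi
    exact lt_of_le_of_lt (Polynomial.degree_C_mul_X_pow_le i _)
      (by exact_mod_cast Finset.mem_range.mp hi)
  have hqeval : ∀ x : ℝ, q.eval x = taylorWithinEval β (m - 1) Set.univ 0 x := by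
    intro x
    rw [taylor_within_apply, Nat.sub_add_cancel hm, hq, Polynomial.eval_finset_sum]
    refine Finset.sum_congr rfl fun i _ => ?_
    simp [iteratedDerivWithin_univ, smul_eq_mul, sub_zero, div_eq_mul_inv]
    ring
  refine ⟨q, hqdeg, ?_⟩
  intro x hx
  obtain ⟨hx0, hx1⟩ := hx
  have hlt : ((m - 1 : ℕ) : ℕ∞) < (m : ℕ∞) := by
    exact_mod_cast Nat.sub_lt (by omega) one_pos
  have hF : ∀ y ∈ Set.uIcc (0:ℝ) x,
      HasDerivAt (fun y => taylorWithinEval β (m - 1) Set.univ y x)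
        ((((m - 1)! : ℝ)⁻¹ * (x - y) ^ (m - 1)) * g y) y := by
    intro y _
    have h := hasDerivWithinAt_taylorWithinEval (f := β) (x := x) (y := y)
      (n := m - 1) (s := Set.univ) (s' := Set.univ)
      uniqueDiffOn_univ
      (by simp [Filter.univ_mem]) (Set.mem_univ y) (subset_refl _)
      ((hβ.of_le (by exact_mod_cast Nat.sub_le m 1 :
        ((m - 1 : ℕ) : WithTop ℕ∞) ≤ (m : WithTop ℕ∞))).contDiffOn)
      (by
        rw [iteratedDerivWithin_univ]
        exact ((hβ.differentiable_iteratedDeriv (m - 1)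
          (by exact_mod_cast hlt)) y).differentiableWithinAt)
    rw [Nat.sub_add_cancel hm, iteratedDerivWithin_univ] at h
    rw [← hasDerivWithinAt_univ]
    simpa [smul_eq_mul] using h
  have hcont : Continuous fun u => (((m - 1)! : ℝ)⁻¹ * (x - u) ^ (m - 1)) * g u :=
    ((continuous_const.mul ((continuous_const.sub continuous_id).pow _)).mul hg)
  have hFTC := intervalIntegral.integral_eq_sub_of_hasDerivAt hF
    (hcont.intervalIntegrable _ _)
  rw [taylorWithinEval_self, ← hqeval] at hFTC
  have habs : |β x - q.eval x| ≤ ∫ u in (0:ℝ)..1, |g u| := by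
    rw [show β x - q.eval x = ∫ u in (0:ℝ)..x,
        (((m - 1)! : ℝ)⁻¹ * (x - u) ^ (m - 1)) * g u from hFTC.symm]
    calc |∫ u in (0:ℝ)..x, (((m - 1)! : ℝ)⁻¹ * (x - u) ^ (m - 1)) * g u|
        ≤ ∫ u in (0:ℝ)..x, |(((m - 1)! : ℝ)⁻¹ * (x - u) ^ (m - 1)) * g u| :=
          intervalIntegral.abs_integral_le_integral_abs hx0
      _ ≤ ∫ u in (0:ℝ)..x, |g u| := by
          refine intervalIntegral.integral_mono_on hx0
            (hcont.abs.intervalIntegrable _ _) (hg.abs.intervalIntegrable _ _) ?_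
          intro u hu
          rw [abs_mul]
          refine mul_le_of_le_one_left (abs_nonneg _) ?_
          rw [abs_mul, abs_pow]
          refine mul_le_one₀ ?_ (by positivity) ?_
          · rw [abs_of_nonneg (by positivity)]
            exact inv_le_one_of_one_le₀
              (by exact_mod_cast Nat.one_le_iff_ne_zero.mpr (Nat.factorial_ne_zero _))
          · refine pow_le_one₀ (abs_nonneg _) ?_
            rw [abs_of_nonneg (by linarith [hu.2])]
            linarith [hu.1]
      _ ≤ ∫ u in (0:ℝ)..1, |g u| := by
          refine intervalIntegral.integral_mono_interval le_rfl hx0 hx1 ?_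
            (hg.abs.intervalIntegrable _ _)
          filter_upwards with u using abs_nonneg _
  have hCS := sq_integral_abs_le g hg
  have h2 : (β x - q.eval x) ^ 2 ≤ (∫ u in (0:ℝ)..1, |g u|) ^ 2 := by
    rw [← sq_abs]
    exact pow_le_pow_left₀ (abs_nonneg _) habs 2
  exact h2.trans hCS

/-- Equivalence of the penalty `J_m` of the paper and the penalty `J̃_m` of Crambes, Kneip and
Sarda: with `J²(β) = (1/p)Σ_j β(t_j)² + ∫_0^1 |β^{(m)}|²` and
`J̃²(β) = (1/p)Σ_j (Pβ)(t_j)² + ∫_0^1 |β^{(m)}|²`, where `P` is the orthogonal projection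
(with respect to the discrete inner product) onto polynomials of degree `< m` evaluated at the
points `{t_j}`, there exist constants `0 < c₁ ≤ c₂ < ∞`, not depending on `β`, such that
`c₁ J̃(β) ≤ J(β) ≤ c₂ J̃(β)` for all `β`. -/
theorem stmt11 (m : ℕ) (hm : 1 ≤ m) (p : ℕ) (hp : 0 < p)
    (t : Fin p → ℝ) (ht : ∀ j, t j ∈ Set.Ioo (0 : ℝ) 1) (htinj : Function.Injective t)
    (P : (ℝ → ℝ) → (ℝ → ℝ))
    (hP_poly : ∀ β : ℝ → ℝ, ∃ q : Polynomial ℝ, q.degree < (m : ℕ) ∧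
      ∀ x, P β x = q.eval x)
    (hP_orth : ∀ (β : ℝ → ℝ) (q : Polynomial ℝ), q.degree < (m : ℕ) →
      (1 / (p : ℝ)) * ∑ j, (β (t j) - P β (t j)) * q.eval (t j) = 0) :
    ∃ c₁ c₂ : ℝ, 0 < c₁ ∧ c₁ ≤ c₂ ∧
      ∀ β : ℝ → ℝ, ContDiff ℝ m β →
        c₁ * Real.sqrt (discSq p t (P β) + penInt m β) ≤
            Real.sqrt (discSq p t β + penInt m β) ∧
          Real.sqrt (discSq p t β + penInt m β) ≤
            c₂ * Real.sqrt (discSq p t (P β) + penInt m β) := by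
  refine ⟨1, Real.sqrt 2, one_pos, by
    rw [show (1:ℝ) = Real.sqrt 1 from Real.sqrt_one.symm]
    exact Real.sqrt_le_sqrt (by norm_num), ?_⟩
  intro β hβ
  have hppos : (0:ℝ) < p := by exact_mod_cast hp
  obtain ⟨qP, hqPdeg, hqPeval⟩ := hP_poly β
  have hpen0 : 0 ≤ penInt m β :=
    intervalIntegral.integral_nonneg (by norm_num) fun u _ => sq_nonneg _
  have hdisc0 : ∀ f : ℝ → ℝ, 0 ≤ discSq p t f := fun f =>
    mul_nonneg (by positivity) (Finset.sum_nonneg fun j _ => sq_nonneg _)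
  -- orthogonality without the `1/p` factor
  have horth : ∀ q : Polynomial ℝ, q.degree < (m : ℕ) →
      ∑ j, (β (t j) - P β (t j)) * q.eval (t j) = 0 := by
    intro q hq
    have h := hP_orth β q hq
    have hne : (1 / (p:ℝ)) ≠ 0 := by positivity
    exact (mul_eq_zero.mp h).resolve_left hne
  -- Pythagoras for the projection
  have hpyth : ∑ j, β (t j) ^ 2
      = ∑ j, P β (t j) ^ 2 + ∑ j, (β (t j) - P β (t j)) ^ 2 := by
    have hc : ∑ j, (β (t j) - P β (t j)) * P β (t j) = 0 := by
      have := horth qP hqPdeg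
      simpa [← hqPeval] using this
    have hexp : ∑ j, β (t j) ^ 2
        = (∑ j, (P β (t j) ^ 2 + (β (t j) - P β (t j)) ^ 2))
          + 2 * ∑ j, (β (t j) - P β (t j)) * P β (t j) := by
      rw [Finset.mul_sum, ← Finset.sum_add_distrib]
      exact Finset.sum_congr rfl fun j _ => by ring
    rw [hexp, hc, Finset.sum_add_distrib]; ring
  -- the Taylor polynomial comparison
  obtain ⟨q, hqdeg, hqapprox⟩ := taylor_poly_approx m hm β hβ
  have hsum : ∑ j, (β (t j) - P β (t j)) ^ 2 ≤ (p : ℝ) * penInt m β := by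
    have hqq : (qP - q).degree < (m : ℕ) :=
      lt_of_le_of_lt (Polynomial.degree_sub_le _ _) (max_lt hqPdeg hqdeg)
    have hc := horth (qP - q) hqq
    have hBle : ∑ j, (β (t j) - P β (t j)) ^ 2
        ≤ ∑ j, (β (t j) - q.eval (t j)) ^ 2 := by
      have hexp : ∑ j, (β (t j) - q.eval (t j)) ^ 2
          = (∑ j, ((β (t j) - P β (t j)) ^ 2 + (P β (t j) - q.eval (t j)) ^ 2))
            + 2 * ∑ j, (β (t j) - P β (t j)) * (qP - q).eval (t j) := by
        rw [Finset.mul_sum, ← Finset.sum_add_distrib]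
        refine Finset.sum_congr rfl fun j _ => ?_
        rw [Polynomial.eval_sub, ← hqPeval]
        ring
      rw [hexp, hc, Finset.sum_add_distrib]
      have := Finset.sum_nonneg (s := Finset.univ)
        (f := fun j => (P β (t j) - q.eval (t j)) ^ 2) fun j _ => sq_nonneg _
      linarith
    refine hBle.trans ?_
    calc ∑ j, (β (t j) - q.eval (t j)) ^ 2
        ≤ ∑ _j : Fin p, penInt m β :=
          Finset.sum_le_sum fun j _ => hqapprox (t j)
            ⟨le_of_lt (ht j).1, le_of_lt (ht j).2⟩
      _ = (p : ℝ) * penInt m β := by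
          rw [Finset.sum_const, Finset.card_univ, Fintype.card_fin, nsmul_eq_mul]
  have key : discSq p t β ≤ discSq p t (P β) + penInt m β := by
    unfold discSq
    rw [hpyth, mul_add]
    have : (1 / (p:ℝ)) * ∑ j, (β (t j) - P β (t j)) ^ 2
        ≤ (1 / (p:ℝ)) * ((p:ℝ) * penInt m β) :=
      mul_le_mul_of_nonneg_left hsum (by positivity)
    rw [show (1 / (p:ℝ)) * ((p:ℝ) * penInt m β) = penInt m β by field_simp] at this
    linarith
  have hPle : discSq p t (P β) ≤ discSq p t β := by
    unfold discSq
    rw [hpyth, mul_add]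
    have : 0 ≤ (1 / (p:ℝ)) * ∑ j, (β (t j) - P β (t j)) ^ 2 :=
      mul_nonneg (by positivity) (Finset.sum_nonneg fun j _ => sq_nonneg _)
    linarith
  constructor
  · rw [one_mul]
    exact Real.sqrt_le_sqrt (by linarith)
  · calc Real.sqrt (discSq p t β + penInt m β)
        ≤ Real.sqrt (2 * (discSq p t (P β) + penInt m β)) :=
          Real.sqrt_le_sqrt (by linarith [hdisc0 (P β)])
      _ = Real.sqrt 2 * Real.sqrt (discSq p t (P β) + penInt m β) :=
          Real.sqrt_mul (by norm_num) _
end
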